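/- There is a short exact sequence 0 → Ω_G^{n−1}(M;V)/Ω_G^{n−1}(M;V)_Λ → ĤG^n(M;Λ) → H_G^n(M;Λ) → 0, where the right map is the characteristic class map. -/

import Mathlib

/-- Abstract model of the data underlying the Hopkins–Singer style differential
equivariant cochain complex `ČG(q)(M;Λ)` for a compact Lie group `G` acting on a
smooth manifold `M`:
* `CΛ k = C^k(EG ×_G M; Λ)` are singular cochains on the Borel construction with
  coefficients in the totally disconnected subgroup `Λ ⊆ V`;
* `C k = C^k(EG ×_G M; V)`;
* `D k = C^k(EG ×_G M; V/Λ)`;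
* `Ω k = Ω_G^k(M; V)` is the Weil model of equivariant differential forms,
  included into `C` via the Weil homomorphism `j` for a universal connection on
  `EG`;
* `δ` is the singular coboundary and `d_G` the equivariant de Rham
  differential. -/
structure EquivariantHSData (CΛ C D Ω : ℤ → Type)
    [∀ k, AddCommGroup (CΛ k)] [∀ k, AddCommGroup (C k)]
    [∀ k, AddCommGroup (D k)] [∀ k, AddCommGroup (Ω k)] where
  δΛ : ∀ k, CΛ k →+ CΛ (k + 1)
  δ : ∀ k, C k →+ C (k + 1)
  δD : ∀ k, D k →+ D (k + 1)
  dG : ∀ k, Ω k →+ Ω (k + 1)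
  δΛ_sq : ∀ k x, δΛ (k + 1) (δΛ k x) = 0
  δ_sq : ∀ k x, δ (k + 1) (δ k x) = 0
  δD_sq : ∀ k x, δD (k + 1) (δD k x) = 0
  dG_sq : ∀ k x, dG (k + 1) (dG k x) = 0
  /-- the inclusion of `Λ`-cochains into `V`-cochains -/
  ι : ∀ k, CΛ k →+ C k
  /-- the inclusion of equivariant forms as singular cochains (Weil homomorphism) -/
  j : ∀ k, Ω k →+ C k
  /-- the reduction of `V`-cochains modulo `Λ` -/
  pr : ∀ k, C k →+ D k
  ι_δ : ∀ k x, ι (k + 1) (δΛ k x) = δ k (ι k x)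
  j_d : ∀ k x, j (k + 1) (dG k x) = δ k (j k x)
  pr_δ : ∀ k x, pr (k + 1) (δ k x) = δD k (pr k x)

variable {CΛ C D Ω : ℤ → Type}
  [∀ k, AddCommGroup (CΛ k)] [∀ k, AddCommGroup (C k)]
  [∀ k, AddCommGroup (D k)] [∀ k, AddCommGroup (Ω k)]


variable (dat : EquivariantHSData CΛ C D Ω)

/-- the differential `d(c,h,ω) = (δc, ω - c - δh, d_Gω)` of `ČG(M;Λ)`, on the
component of degree `a+1` (middle cochain of degree `a`), as an additive map -/
def dHSHom (a : ℤ) :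
    (CΛ (a + 1) × C a × Ω (a + 1)) →+ (CΛ (a + 1 + 1) × C (a + 1) × Ω (a + 1 + 1)) :=
  AddMonoidHom.mk'
    (fun x => (dat.δΛ _ x.1, dat.j _ x.2.2 - dat.ι _ x.1 - dat.δ _ x.2.1, dat.dG _ x.2.2))
    (by
      rintro ⟨c₁, h₁, ω₁⟩ ⟨c₂, h₂, ω₂⟩
      simp only [Prod.fst_add, Prod.snd_add, Prod.mk_add_mk, Prod.mk.injEq, map_add]
      exact ⟨by trivial, by abel, by simp⟩)

/-- the differential applied to the flat (`ω = 0`) part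
`ČG(n)^{n-1} = {(c, h, 0)}` one degree down: `(c,h) ↦ d(c,h,0) = (δc, -c-δh, 0)` -/
def bHom (a : ℤ) :
    (CΛ (a + 1) × C a) →+ (CΛ (a + 1 + 1) × C (a + 1) × Ω (a + 1 + 1)) :=
  AddMonoidHom.mk'
    (fun x => (dat.δΛ _ x.1, - dat.ι _ x.1 - dat.δ _ x.2, 0))
    (by
      rintro ⟨c₁, h₁⟩ ⟨c₂, h₂⟩
      simp only [Prod.fst_add, Prod.snd_add, Prod.mk_add_mk, Prod.mk.injEq, map_add]
      exact ⟨by trivial, by abel, by simp⟩)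

/-- the differential equivariant cohomology
`ĤG^{a+2}(M;Λ) = Z^{a+2} / d ČG^{a+1}_{flat}` -/
def Hhat (a : ℤ) : Type :=
  (dHSHom dat (a + 1)).ker ⧸ ((bHom dat a).range.addSubgroupOf (dHSHom dat (a + 1)).ker)

noncomputable instance (a : ℤ) : AddCommGroup (Hhat dat a) := by
  unfold Hhat; infer_instance

/-- Borel equivariant cohomology `H_G^{a+1}(M; V/Λ)`, computed from the
`V/Λ`-cochain complex `D` -/
def HD (a : ℤ) : Type :=
  (dat.δD (a + 1)).ker ⧸ ((dat.δD a).range.addSubgroupOf (dat.δD (a + 1)).ker)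

noncomputable instance (a : ℤ) : AddCommGroup (HD dat a) := by
  unfold HD; infer_instance

/-- Borel equivariant cohomology `H_G^{a+2}(M; Λ)`, computed from the
`Λ`-cochain complex `CΛ` -/
def HL (a : ℤ) : Type :=
  (dat.δΛ (a + 1 + 1)).ker ⧸ ((dat.δΛ (a + 1)).range.addSubgroupOf (dat.δΛ (a + 1 + 1)).ker)

noncomputable instance (a : ℤ) : AddCommGroup (HL dat a) := by
  unfold HL; infer_instance

/-- the subgroup `Ω_G^{a+1}(M;V)_Λ` of closed equivariant forms with `Λ`-periods -/
def periods (a : ℤ) : AddSubgroup (Ω (a + 1)) where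
  carrier := {ω | dat.dG (a + 1) ω = 0 ∧ ∃ (c : CΛ (a + 1)) (b : C a),
      dat.j (a + 1) ω = dat.ι (a + 1) c + dat.δ a b}
  add_mem' := by
    rintro x y ⟨hx, cx, bx, hx2⟩ ⟨hy, cy, byy, hy2⟩
    refine ⟨by simp [map_add, hx, hy], cx + cy, bx + byy, ?_⟩
    simp only [map_add, hx2, hy2]
    abel
  zero_mem' := ⟨by simp, 0, 0, by simp⟩
  neg_mem' := by
    rintro x ⟨hx, cx, bx, hx2⟩
    exact ⟨by simp [map_neg, hx], -cx, -bx, by simp only [map_neg, hx2]; abel⟩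

section SESAux

variable (a : ℤ)

lemma memKerIff (x : CΛ (a + 1 + 1) × C (a + 1) × Ω (a + 1 + 1)) :
    x ∈ (dHSHom dat (a + 1)).ker ↔
      dat.δΛ _ x.1 = 0 ∧ dat.j _ x.2.2 - dat.ι _ x.1 - dat.δ _ x.2.1 = 0 ∧
        dat.dG _ x.2.2 = 0 := by
  simp [dHSHom, AddMonoidHom.mem_ker, AddMonoidHom.mk'_apply, Prod.ext_iff]

/-- the cocycle `(0, jω, d_G ω)` attached to a form `ω` -/
def ibKer : Ω (a + 1) →+ (dHSHom dat (a + 1)).ker :=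
  AddMonoidHom.mk'
    (fun ω => ⟨(0, dat.j _ ω, dat.dG _ ω), by
      rw [memKerIff]
      exact ⟨map_zero _, by simp [dat.j_d], dat.dG_sq _ _⟩⟩)
    (by
      intro x y
      apply Subtype.ext
      simp [Prod.ext_iff])

/-- the characteristic class of a cocycle, i.e. its first component -/
def ccKer : (dHSHom dat (a + 1)).ker →+ HL dat a :=
  (QuotientAddGroup.mk'
      ((dat.δΛ (a + 1)).range.addSubgroupOf (dat.δΛ (a + 1 + 1)).ker)).comp
    (AddMonoidHom.mk'
      (fun x => (⟨x.val.1, ((memKerIff dat a x.val).mp x.2).1⟩ : (dat.δΛ (a + 1 + 1)).ker))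
      (by intro x y; apply Subtype.ext; simp))

lemma ccKer_eq_zero_iff (x : (dHSHom dat (a + 1)).ker) :
    ccKer dat a x = 0 ↔ x.val.1 ∈ (dat.δΛ (a + 1)).range := by
  have h0 : ccKer dat a x = QuotientAddGroup.mk
      (⟨x.val.1, AddMonoidHom.mem_ker.mpr ((memKerIff dat a x.val).mp x.2).1⟩ : (dat.δΛ (a + 1 + 1)).ker) := rfl
  rw [h0]
  exact (QuotientAddGroup.eq_zero_iff _).trans AddSubgroup.mem_addSubgroupOf

lemma ccKer_apply (x : (dHSHom dat (a + 1)).ker) (c : (dat.δΛ (a + 1 + 1)).ker)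
    (h : x.val.1 = c.val) : ccKer dat a x = QuotientAddGroup.mk c := by
  have h0 : ccKer dat a x = QuotientAddGroup.mk
      (⟨x.val.1, ((memKerIff dat a x.val).mp x.2).1⟩ : (dat.δΛ (a + 1 + 1)).ker) := rfl
  rw [h0]
  congr 1
  exact Subtype.ext h

lemma ibFull_eq (N : AddSubgroup (dHSHom dat (a + 1)).ker) (ω : Ω (a + 1)) :
    ((QuotientAddGroup.mk' N).comp (ibKer dat a)) ω = QuotientAddGroup.mk (ibKer dat a ω) := rfl

end SESAux

/-- **SES 2.**  There is a short exact sequence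
`0 → Ω_G^{n−1}(M;V)/Ω_G^{n−1}(M;V)_Λ → ĤG^n(M;Λ) → H_G^n(M;Λ) → 0`, where the
right map is the characteristic class map.  Here `n = a + 2`;
`Ω_G^{n-1}(M;V)_Λ` is the subgroup of closed equivariant forms with `Λ`-periods,
and the hypotheses record that `ι` and the Weil homomorphism `j` are injective
and that `j` is a quasi-isomorphism. -/
theorem ses_characteristic_class
    (hι_inj : ∀ k, Function.Injective (dat.ι k))
    (hj_inj : ∀ k, Function.Injective (dat.j k))
    (hqis_surj : ∀ (k : ℤ) (z : C (k + 1)), dat.δ (k + 1) z = 0 →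
      ∃ (ωf : Ω (k + 1)) (b : C k),
        dat.dG (k + 1) ωf = 0 ∧ z = dat.j (k + 1) ωf + dat.δ k b)
    (hqis_inj : ∀ (k : ℤ) (ωf : Ω (k + 1)), dat.dG (k + 1) ωf = 0 →
      (∃ b : C k, dat.j (k + 1) ωf = dat.δ k b) → ∃ α : Ω k, ωf = dat.dG k α)
    (a : ℤ) :
    ∃ (ib : (Ω (a + 1) ⧸ periods dat a) →+ Hhat dat a) (cc : Hhat dat a →+ HL dat a),
      Function.Injective ib ∧
      Function.Surjective cc ∧
      (∀ x : Hhat dat a, cc x = 0 ↔ x ∈ Set.range ib) := by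
  set B := (bHom dat a).range.addSubgroupOf (dHSHom dat (a + 1)).ker with hB
  have hper : ∀ ω ∈ periods dat a,
      ((QuotientAddGroup.mk' B).comp (ibKer dat a)) ω = 0 := by
    rintro ω ⟨hcl, c, b, hjb⟩
    have hδjω : dat.δ (a + 1) (dat.j (a + 1) ω) = 0 := by
      rw [← dat.j_d, hcl, map_zero]
    have hδΛc : dat.δΛ (a + 1) c = 0 := by
      apply hι_inj
      rw [dat.ι_δ, map_zero]
      have : dat.δ (a + 1) (dat.ι (a + 1) c)
          = dat.δ (a + 1) (dat.j (a + 1) ω) - dat.δ (a + 1) (dat.δ a b) := by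
        rw [hjb, map_add]; abel
      rw [this, hδjω, dat.δ_sq, sub_zero]
    rw [ibFull_eq, QuotientAddGroup.eq_zero_iff, AddSubgroup.mem_addSubgroupOf]
    refine ⟨(-c, -b), ?_⟩
    show ((dat.δΛ _ (-c), - dat.ι _ (-c) - dat.δ _ (-b), (0 : Ω _)) : _)
      = ((0 : CΛ _), dat.j _ ω, dat.dG _ ω)
    rw [Prod.mk.injEq, Prod.mk.injEq]
    refine ⟨by rw [map_neg, hδΛc, neg_zero], ⟨?_, hcl.symm⟩⟩
    rw [map_neg, map_neg, hjb]; abel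
  refine ⟨QuotientAddGroup.lift _ ((QuotientAddGroup.mk' B).comp (ibKer dat a))
      (fun ω hω => AddMonoidHom.mem_ker.mpr (hper ω hω)),
    QuotientAddGroup.lift B (ccKer dat a)
      (fun x hx => by
        rw [AddMonoidHom.mem_ker, ccKer_eq_zero_iff]
        rw [hB, AddSubgroup.mem_addSubgroupOf] at hx
        obtain ⟨⟨c', h'⟩, hy⟩ := hx
        exact ⟨c', by rw [← hy]; rfl⟩),
    ?_, ?_, ?_⟩
  · -- injectivity of ib
    rw [injective_iff_map_eq_zero]
    intro x
    refine QuotientAddGroup.induction_on x ?_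
    intro ω hx
    have hx' : (QuotientAddGroup.mk (ibKer dat a ω) :
        (dHSHom dat (a + 1)).ker ⧸ B) = 0 := hx
    rw [QuotientAddGroup.eq_zero_iff, hB, AddSubgroup.mem_addSubgroupOf] at hx'
    obtain ⟨⟨c', h'⟩, hy⟩ := hx'
    have hy' : ((dat.δΛ _ c', - dat.ι _ c' - dat.δ _ h', (0 : Ω _)) : _)
        = ((0 : CΛ _), dat.j _ ω, dat.dG _ ω) := hy
    rw [Prod.mk.injEq, Prod.mk.injEq] at hy'
    obtain ⟨-, h2, h3⟩ := hy'
    refine (QuotientAddGroup.eq_zero_iff ω).mpr ⟨h3.symm, -c', -h', ?_⟩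
    rw [map_neg, map_neg, ← h2]; abel
  · -- surjectivity of cc
    intro z
    refine QuotientAddGroup.induction_on z ?_
    rintro ⟨c, hc⟩
    have hc' : dat.δΛ (a + 1 + 1) c = 0 := hc
    have hδιc : dat.δ (a + 1 + 1) (dat.ι (a + 1 + 1) c) = 0 := by
      rw [← dat.ι_δ, hc', map_zero]
    obtain ⟨ωf, b, hωf, hz⟩ := hqis_surj (a + 1) (dat.ι (a + 1 + 1) c) hδιc
    refine ⟨QuotientAddGroup.mk ⟨(c, -b, ωf), ?_⟩, ?_⟩
    · rw [memKerIff]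
      refine ⟨hc', ?_, hωf⟩
      rw [map_neg, hz]; abel
    · exact ccKer_apply dat a _ ⟨c, hc⟩ rfl
  · -- exactness
    intro x
    constructor
    · refine QuotientAddGroup.induction_on x ?_
      intro y hy
      have hy' : ccKer dat a y = 0 := hy
      rw [ccKer_eq_zero_iff] at hy'
      replace hy := hy'
      obtain ⟨c', hc'⟩ := hy
      obtain ⟨hy1, hy2, hy3⟩ := (memKerIff dat a y.val).mp y.2
      have hjω : dat.j _ y.val.2.2 = dat.δ (a + 1) (dat.ι (a + 1) c' + y.val.2.1) := by
        rw [map_add, ← dat.ι_δ, hc', ← sub_eq_zero, ← hy2]; abel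
      obtain ⟨α, hα⟩ := hqis_inj (a + 1) y.val.2.2 hy3 ⟨dat.ι (a + 1) c' + y.val.2.1, hjω⟩
      have hδz : dat.δ (a + 1) (dat.ι (a + 1) c' + y.val.2.1 - dat.j (a + 1) α) = 0 := by
        rw [map_sub, ← hjω, ← dat.j_d, ← hα, sub_self]
      obtain ⟨ωf, b, hωf, hzeq⟩ :=
        hqis_surj a (dat.ι (a + 1) c' + y.val.2.1 - dat.j (a + 1) α) hδz
      refine ⟨QuotientAddGroup.mk (α + ωf), ?_⟩
      show (QuotientAddGroup.mk (ibKer dat a (α + ωf)) :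
          (dHSHom dat (a + 1)).ker ⧸ B) = QuotientAddGroup.mk y
      rw [QuotientAddGroup.eq_iff_sub_mem, hB, AddSubgroup.mem_addSubgroupOf]
      refine ⟨(-c', b), ?_⟩
      show ((dat.δΛ _ (-c'), - dat.ι _ (-c') - dat.δ _ b, (0 : Ω _)) : _)
        = (↑(ibKer dat a (α + ωf)) - y.val : _)
      have hval : (↑(ibKer dat a (α + ωf)) : CΛ (a+1+1) × C (a+1) × Ω (a+1+1))
          = (0, dat.j _ (α + ωf), dat.dG _ (α + ωf)) := rfl
      rw [hval, Prod.ext_iff, Prod.ext_iff]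
      refine ⟨?_, ?_, ?_⟩
      · show dat.δΛ _ (-c') = 0 - y.val.1
        rw [map_neg, hc', zero_sub]
      · show - dat.ι _ (-c') - dat.δ _ b = dat.j _ (α + ωf) - y.val.2.1
        rw [map_neg, neg_neg, map_add]
        have := hzeq
        rw [sub_eq_iff_eq_add] at this
        have h21 : (↑y : CΛ (a+1+1) × C (a+1) × Ω (a+1+1)).2.1
            = dat.j (a + 1) ωf + dat.δ a b + dat.j (a + 1) α - dat.ι (a + 1) c' := by
          rw [← this]; abel
        rw [h21]; abel
      · show (0 : Ω _) = dat.dG _ (α + ωf) - y.val.2.2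
        rw [map_add, ← hα, hωf, add_zero, sub_self]
    · rintro ⟨y, rfl⟩
      refine QuotientAddGroup.induction_on y ?_
      intro ω
      show ccKer dat a (ibKer dat a ω) = 0
      rw [ccKer_eq_zero_iff]
      exact ⟨0, by rw [map_zero]; rfl⟩
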